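/- arXiv:1110.1358 — 4 statements merged into one kernel-verified Lean document; each statement's English description precedes it below -/
import Mathlib

section
/- Let epsilon ∈ (0, 1) and rho > 0, and k a positive integer. Suppose nonnegative weights evolve by w_i^(t) >= w_i^(t-1) + (2 epsilon^2 / (k rho)) * mu^(t-1) and mu^(t) <= (1 + epsilon(1+2 epsilon)/rho) * mu^(t-1), where mu^(t) = sum_i w_i^(t), with w_i^(0) = 1. Then for all t and all i, w_i^(t) >= (epsilon / k) * mu^(t). -/
theorem stmt_8 (k : ℕ) (hk : 0 < k) (ε ρ : ℝ) (hε : 0 < ε) (hε2 : ε < 1/2) (hρ : 0 < ρ)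
    (w : ℕ → Fin k → ℝ) (hnn : ∀ t i, 0 ≤ w t i)
    (h0 : ∀ i, w 0 i = 1)
    (hup : ∀ t : ℕ, ∀ i, w (t + 1) i ≥ w t i + (2 * ε ^ 2 / (k * ρ)) * ∑ j, w t j)
    (hμ : ∀ t : ℕ, (∑ j, w (t + 1) j) ≤ (1 + ε * (1 + 2 * ε) / ρ) * ∑ j, w t j) :
    ∀ t : ℕ, ∀ i, w t i ≥ (ε / k) * ∑ j, w t j := by
  have hk' : (0:ℝ) < k := Nat.cast_pos.mpr hk
  intro t
  induction t with
  | zero =>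
    intro i
    simp only [h0, Finset.sum_const, Finset.card_univ, Fintype.card_fin, nsmul_eq_mul, mul_one]
    rw [ge_iff_le, div_mul_cancel₀ _ (ne_of_gt hk')]
    linarith
  | succ t ih =>
    intro i
    have hμnn : 0 ≤ ∑ j, w t j := Finset.sum_nonneg fun j _ => hnn t j
    have h1 : w (t+1) i ≥ (ε/k) * (1 + 2*ε/ρ) * ∑ j, w t j := by
      have := hup t i
      have hih := ih i
      have : w (t+1) i ≥ (ε/k) * (∑ j, w t j) + (2 * ε ^ 2 / (k * ρ)) * ∑ j, w t j := by
        linarith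
      calc w (t+1) i ≥ (ε/k) * (∑ j, w t j) + (2 * ε ^ 2 / (k * ρ)) * ∑ j, w t j := this
        _ = (ε/k) * (1 + 2*ε/ρ) * ∑ j, w t j := by field_simp
    have h2 : (ε/k) * (∑ j, w (t+1) j) ≤ (ε/k) * ((1 + ε*(1+2*ε)/ρ) * ∑ j, w t j) := by
      apply mul_le_mul_of_nonneg_left (hμ t) (by positivity)
    have h3 : (ε/k) * ((1 + ε*(1+2*ε)/ρ) * ∑ j, w t j) ≤ (ε/k) * (1 + 2*ε/ρ) * ∑ j, w t j := by
      rw [← mul_assoc]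
      apply mul_le_mul_of_nonneg_right _ hμnn
      apply mul_le_mul_of_nonneg_left _ (by positivity)
      have h4 : ε*(1+2*ε) ≤ 2*ε := by nlinarith
      have h5 : ε*(1+2*ε)/ρ ≤ 2*ε/ρ := by gcongr
      linarith
    linarith
end

section
/- Let L be a symmetric PSD n×n matrix, s ∈ ℝ^n, x ∈ ℝ^n, and y ∈ ℝ with y^2 > (x - s)^T L (x - s). Then the matrix (y^2 - (x-s)^T L (x-s)) * L + (2 - 4 y^2 / (y^2 + (x-s)^T L (x-s))) * L (x-s) (x-s)^T L is positive semidefinite. -/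
open Matrix

theorem stmt_10 (n : ℕ) (L : Matrix (Fin n) (Fin n) ℝ) (hL : L.PosSemidef)
    (s x : Fin n → ℝ) (y : ℝ)
    (hy : (x - s) ⬝ᵥ L.mulVec (x - s) < y ^ 2) :
    ((y ^ 2 - (x - s) ⬝ᵥ L.mulVec (x - s)) • L +
      (2 - 4 * y ^ 2 / (y ^ 2 + (x - s) ⬝ᵥ L.mulVec (x - s))) •
        vecMulVec (L.mulVec (x - s)) (L.mulVec (x - s))).PosSemidef := by
  set v := x - s with hv
  set q := v ⬝ᵥ L.mulVec v with hqdef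
  set u := L.mulVec v with hu
  have hq : 0 ≤ q := by
    have := hL.dotProduct_mulVec_nonneg v
    simpa using this
  have hd : 0 < y ^ 2 + q := by nlinarith
  have hLt : Lᵀ = L := by
    have := hL.1.eq
    simpa [Matrix.conjTranspose_eq_transpose_of_trivial] using this
  have hsym : ∀ a b : Fin n → ℝ, a ⬝ᵥ L.mulVec b = b ⬝ᵥ L.mulVec a := by
    intro a b
    rw [Matrix.dotProduct_mulVec]
    conv_lhs => rw [← hLt]
    rw [Matrix.vecMul_transpose, dotProduct_comm]
  have cs : ∀ z : Fin n → ℝ, (z ⬝ᵥ u) ^ 2 ≤ (z ⬝ᵥ L.mulVec z) * q := by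
    intro z
    have hquad : ∀ t : ℝ, 0 ≤ q * (t * t) + (2 * (z ⬝ᵥ u)) * t + z ⬝ᵥ L.mulVec z := by
      intro t
      have h0 := hL.dotProduct_mulVec_nonneg (z + t • v)
      simp only [star_trivial] at h0
      have hexp : (z + t • v) ⬝ᵥ L.mulVec (z + t • v)
          = q * (t * t) + (2 * (z ⬝ᵥ u)) * t + z ⬝ᵥ L.mulVec z := by
        simp only [hqdef, hu]
        simp only [Matrix.mulVec_add, Matrix.mulVec_smul, dotProduct_add,
          add_dotProduct, dotProduct_smul, smul_dotProduct, smul_eq_mul,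
          hsym v z]
        ring
      rw [hexp] at h0
      exact h0
    have hdis := discrim_le_zero hquad
    rw [discrim] at hdis
    nlinarith
  rw [Matrix.posSemidef_iff_dotProduct_mulVec]
  constructor
  · have hW : (vecMulVec u u).IsHermitian := by
      ext i j
      simp [vecMulVec, Matrix.conjTranspose_apply, mul_comm]
    have hsm : ∀ (c : ℝ) (M : Matrix (Fin n) (Fin n) ℝ),
        M.IsHermitian → (c • M).IsHermitian := by
      intro c M hM
      have hMt : Mᵀ = M := by simpa [Matrix.conjTranspose_eq_transpose_of_trivial] using hM.eq
      simp [Matrix.IsHermitian, Matrix.conjTranspose_smul, hMt]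
    exact (hsm _ _ hL.1).add (hsm _ _ hW)
  · intro z
    have hz : star z = z := by simp
    rw [hz]
    have hmv : (vecMulVec u u).mulVec z = (u ⬝ᵥ z) • u := by
      ext i
      simp only [Matrix.mulVec, vecMulVec, dotProduct, Pi.smul_apply, smul_eq_mul,
        Matrix.of_apply]
      rw [Finset.sum_mul]
      exact Finset.sum_congr rfl fun j _ => by ring
    rw [Matrix.add_mulVec, Matrix.smul_mulVec, Matrix.smul_mulVec,
      dotProduct_add, dotProduct_smul, dotProduct_smul, hmv, dotProduct_smul]
    set P := z ⬝ᵥ L.mulVec z with hP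
    have hP0 : 0 ≤ P := by simpa using hL.dotProduct_mulVec_nonneg z
    have hB : (z ⬝ᵥ u) ^ 2 ≤ P * q := cs z
    have huz : u ⬝ᵥ z = z ⬝ᵥ u := dotProduct_comm _ _
    simp only [smul_eq_mul, huz]
    set B := z ⬝ᵥ u with hBdef
    have hc : 2 - 4 * y ^ 2 / (y ^ 2 + q) = (2 * q - 2 * y ^ 2) / (y ^ 2 + q) := by
      rw [eq_div_iff (ne_of_gt hd), sub_mul, div_mul_cancel₀ _ (ne_of_gt hd)]
      ring
    rw [hc, div_mul_eq_mul_div, add_div' _ _ _ (ne_of_gt hd)]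
    apply div_nonneg _ hd.le
    nlinarith [mul_nonneg (mul_nonneg hP0 (by nlinarith : (0:ℝ) ≤ y ^ 2 - q))
      (by nlinarith : (0:ℝ) ≤ y ^ 2 - q)]
end

section
/- Let G = (V, E) be a finite undirected graph with distinguished vertices s, t and nonnegative edge weights cost. Then the minimum s-t cut value, min over S ⊆ V with s ∈ S, t ∉ S of sum of cost over edges crossing (S, V\S), equals the minimum over all labelings x : V -> ℝ with x_s = 0, x_t = 1 of sum_{(u,v) ∈ E} cost_{uv} * |x_u - x_v|. -/
open MeasureTheory Set

section helpers

lemma cross_iff (a b θ : ℝ) : ((a ≤ θ) ≠ (b ≤ θ)) ↔ θ ∈ Set.Ico (min a b) (max a b) := by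
  simp only [ne_eq, eq_iff_iff, Set.mem_Ico, min_le_iff, lt_max_iff]
  constructor
  · intro h
    by_cases h1 : a ≤ θ <;> by_cases h2 : b ≤ θ <;> simp_all
  · rintro ⟨h1|h1, h2|h2⟩ <;>
      by_cases h4 : a ≤ θ <;> by_cases h5 : b ≤ θ <;> simp_all <;> linarith

lemma clamp_lip (a b : ℝ) : |max 0 (min a 1) - max 0 (min b 1)| ≤ |a - b| := by
  have h1 := le_abs_self (a-b); have h2 := neg_abs_le (a-b)
  simp only [max_def, min_def]
  split_ifs <;> rw [abs_le] <;> constructor <;> simp_all <;> linarith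

lemma vol_inter (a b : ℝ) (ha0 : 0 ≤ a) (hb1 : b ≤ 1) :
    volume (Set.Ioo (0:ℝ) 1 ∩ Set.Ico a b) = ENNReal.ofReal (b - a) := by
  apply le_antisymm
  · calc volume (Set.Ioo (0:ℝ) 1 ∩ Set.Ico a b) ≤ volume (Set.Icc a b) := by
          apply measure_mono; intro x hx; exact ⟨hx.2.1, hx.2.2.le⟩
      _ = ENNReal.ofReal (b - a) := by rw [Real.volume_Icc]
  · calc ENNReal.ofReal (b - a) = volume (Set.Ioo a b) := by rw [Real.volume_Ioo]
      _ ≤ volume (Set.Ioo (0:ℝ) 1 ∩ Set.Ico a b) := by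
          apply measure_mono; intro x hx
          exact ⟨⟨lt_of_le_of_lt ha0 hx.1, lt_of_lt_of_le hx.2 hb1⟩, ⟨hx.1.le, hx.2⟩⟩

lemma cross_eq_indicator (a b c : ℝ) :
    (fun θ => if (a ≤ θ) ≠ (b ≤ θ) then c else 0)
      = (Set.Ico (min a b) (max a b)).indicator (fun _ => c) := by
  funext θ
  by_cases h : (a ≤ θ) ≠ (b ≤ θ)
  · rw [if_pos h, Set.indicator_of_mem ((cross_iff a b θ).1 h)]
  · rw [if_neg h, Set.indicator_of_notMem (fun hm => h ((cross_iff a b θ).2 hm))]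

lemma integrable_cross (a b c : ℝ) :
    IntegrableOn (fun θ => if (a ≤ θ) ≠ (b ≤ θ) then c else 0) (Set.Ioo (0:ℝ) 1) := by
  rw [cross_eq_indicator]
  exact (integrableOn_const (by simp)).indicator measurableSet_Ico

lemma integral_cross (a b c : ℝ) (ha : a ∈ Set.Icc (0:ℝ) 1) (hb : b ∈ Set.Icc (0:ℝ) 1) :
    ∫ θ in Set.Ioo (0:ℝ) 1, (if (a ≤ θ) ≠ (b ≤ θ) then c else 0) = c * |a - b| := by
  rw [cross_eq_indicator, setIntegral_indicator measurableSet_Ico, setIntegral_const, measureReal_def,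
    vol_inter _ _ (le_min ha.1 hb.1) (max_le ha.2 hb.2)]
  rw [ENNReal.toReal_ofReal (by simp [sub_nonneg, min_le_max])]
  rw [smul_eq_mul, mul_comm]
  congr 1
  rcases le_total a b with h | h <;> rcases abs_cases (a - b) with ⟨h1,h2⟩|⟨h1,h2⟩ <;>
    simp [min_def, max_def, h] <;> linarith

end helpers

theorem stmt_13 (V : Type*) [Fintype V] [DecidableEq V]
    (E : Finset (V × V)) (cost : V × V → ℝ) (hcost : ∀ e, 0 ≤ cost e)
    (s t : V) (hst : s ≠ t) :
    sInf {c : ℝ | ∃ S : Finset V, s ∈ S ∧ t ∉ S ∧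
        c = ∑ e ∈ E, if (e.1 ∈ S) ≠ (e.2 ∈ S) then cost e else 0} =
    sInf {c : ℝ | ∃ x : V → ℝ, x s = 0 ∧ x t = 1 ∧
        c = ∑ e ∈ E, cost e * |x e.1 - x e.2|} := by
  set A := {c : ℝ | ∃ S : Finset V, s ∈ S ∧ t ∉ S ∧
      c = ∑ e ∈ E, if (e.1 ∈ S) ≠ (e.2 ∈ S) then cost e else 0} with hA
  set B := {c : ℝ | ∃ x : V → ℝ, x s = 0 ∧ x t = 1 ∧
      c = ∑ e ∈ E, cost e * |x e.1 - x e.2|} with hB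
  have hAne : A.Nonempty := ⟨_, {s}, Finset.mem_singleton_self s,
    by simp [hst.symm], rfl⟩
  have hAbdd : BddBelow A := by
    refine ⟨0, ?_⟩
    rintro c ⟨S, _, _, rfl⟩
    exact Finset.sum_nonneg fun e _ => by split_ifs with h; exacts [hcost e, le_refl 0]
  have hBbdd : BddBelow B := by
    refine ⟨0, ?_⟩
    rintro c ⟨x, _, _, rfl⟩
    exact Finset.sum_nonneg fun e _ => mul_nonneg (hcost e) (abs_nonneg _)
  apply le_antisymm
  · -- sInf A ≤ sInf B, via rounding
    have hBne : B.Nonempty := ⟨_, fun v => if v = s then 0 else 1, by simp,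
      by simp [hst.symm], rfl⟩
    refine le_csInf hBne ?_
    rintro b ⟨x, hxs, hxt, rfl⟩
    set y : V → ℝ := fun v => max 0 (min (x v) 1) with hy
    have hy01 : ∀ v, y v ∈ Set.Icc (0:ℝ) 1 := fun v =>
      ⟨le_max_left _ _, max_le (by norm_num) (min_le_right _ _)⟩
    have hys : y s = 0 := by simp [hy, hxs]
    have hyt : y t = 1 := by simp [hy, hxt]
    have step1 : ∑ e ∈ E, cost e * |y e.1 - y e.2| ≤ ∑ e ∈ E, cost e * |x e.1 - x e.2| :=
      Finset.sum_le_sum fun e _ =>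
        mul_le_mul_of_nonneg_left (clamp_lip (x e.1) (x e.2)) (hcost e)
    refine le_trans ?_ step1
    -- coarea: the clamped objective is the integral of cut values over thresholds
    have key : ∑ e ∈ E, cost e * |y e.1 - y e.2|
        = ∫ θ in Set.Ioo (0:ℝ) 1,
            ∑ e ∈ E, (if (y e.1 ≤ θ) ≠ (y e.2 ≤ θ) then cost e else 0) := by
      rw [integral_finset_sum (f := fun (e : V × V) θ =>
            if (y e.1 ≤ θ) ≠ (y e.2 ≤ θ) then cost e else 0)
          _ (fun e _ => integrable_cross (y e.1) (y e.2) (cost e))]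
      exact Finset.sum_congr rfl fun e _ =>
        (integral_cross (y e.1) (y e.2) (cost e) (hy01 e.1) (hy01 e.2)).symm
    rw [key]
    have hmem : ∀ θ ∈ Set.Ioo (0:ℝ) 1,
        sInf A ≤ ∑ e ∈ E, (if (y e.1 ≤ θ) ≠ (y e.2 ≤ θ) then cost e else 0) := by
      intro θ hθ
      apply csInf_le hAbdd
      refine ⟨Finset.univ.filter (fun v => y v ≤ θ), ?_, ?_, ?_⟩
      · simp [hys, hθ.1.le]
      · simp [hyt]; linarith [hθ.2]
      · exact Finset.sum_congr rfl fun e _ => by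
          simp only [Finset.mem_filter, Finset.mem_univ, true_and]
    calc sInf A = ∫ _ in Set.Ioo (0:ℝ) 1, sInf A := by
          rw [setIntegral_const, measureReal_def, Real.volume_Ioo]; norm_num
      _ ≤ _ := by
          apply setIntegral_mono_on
          · exact integrableOn_const (by simp)
          · exact integrable_finset_sum (f := fun (e : V × V) θ =>
                if (y e.1 ≤ θ) ≠ (y e.2 ≤ θ) then cost e else 0)
              _ (fun e _ => integrable_cross (y e.1) (y e.2) (cost e))
          · exact measurableSet_Ioo
          · exact hmem
  · -- sInf B ≤ sInf A, since A ⊆ B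
    apply csInf_le_csInf hBbdd hAne
    rintro c ⟨S, hs, ht, rfl⟩
    refine ⟨fun v => if v ∈ S then 0 else 1, by simp [hs], by simp [ht], ?_⟩
    refine Finset.sum_congr rfl fun e _ => ?_
    by_cases h1 : e.1 ∈ S <;> by_cases h2 : e.2 ∈ S <;> simp [h1, h2]
end

section
/- Let a_1,...,a_k be nonnegative reals with sum_i a_i = OPT > 0, and let positive weights be updated as w_i^(t) = w_i^(t-1) + ((epsilon/rho) * (b_i / lambda) + (2 epsilon^2)/(k rho)) * mu^(t-1), where b_i >= 0, mu^(t-1) = sum_j w_j^(t-1), lambda > 0, epsilon ∈ (0, 1), rho > 0, and (epsilon/rho) * (b_i / lambda) * (mu^(t-1) / w_i^(t-1)) <= epsilon for all i. Then nu^(t) - nu^(t-1) >= (epsilon (1 - epsilon) mu^(t-1)) / (rho * OPT * lambda) * sum_i (a_i * b_i / w_i^(t-1)), where nu^(t) = (1/OPT) * sum_i a_i log(w_i^(t)). -/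
theorem stmt_17 (k : ℕ) (a b : Fin k → ℝ) (ha : ∀ i, 0 ≤ a i) (hb : ∀ i, 0 ≤ b i)
    (OPT : ℝ) (hOPT : OPT = ∑ i, a i) (hOPTpos : 0 < OPT)
    (w w' : Fin k → ℝ) (hw : ∀ i, 0 < w i)
    (ε ρ lam μ : ℝ) (hε : 0 < ε) (hε1 : ε < 1) (hρ : 0 < ρ) (hlam : 0 < lam)
    (hμ : μ = ∑ j, w j)
    (hup : ∀ i, w' i = w i + ((ε / ρ) * (b i / lam) + 2 * ε ^ 2 / (k * ρ)) * μ)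
    (hwidth : ∀ i, (ε / ρ) * (b i / lam) * (μ / w i) ≤ ε) :
    (1 / OPT) * (∑ i, a i * Real.log (w' i)) - (1 / OPT) * (∑ i, a i * Real.log (w i)) ≥
      (ε * (1 - ε) * μ) / (ρ * OPT * lam) * ∑ i, a i * b i / w i := by
  have hk : 0 < k := by
    rcases Nat.eq_zero_or_pos k with h | h
    · subst h; simp at hOPT; linarith
    · exact h
  have hμpos : 0 < μ := by
    rw [hμ]
    exact Finset.sum_pos (fun i _ => hw i) ⟨⟨0, hk⟩, Finset.mem_univ _⟩
  have hkR : (0:ℝ) < (k:ℝ) := by exact_mod_cast hk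
  have key : ∀ i, (1 - ε) * (ε / ρ * (b i / lam) * (μ / w i)) ≤
      Real.log (w' i) - Real.log (w i) := by
    intro i
    set v := ε / ρ * (b i / lam) * (μ / w i) with hv
    have hv0 : 0 ≤ v :=
      mul_nonneg (mul_nonneg (div_nonneg hε.le hρ.le) (div_nonneg (hb i) hlam.le))
        (div_nonneg hμpos.le (hw i).le)
    have hvε : v ≤ ε := hwidth i
    have h1 : (0:ℝ) < 1 + v := by linarith
    have hlog1 : (1 - ε) * v ≤ Real.log (1 + v) := by
      have h2 : 1 - (1 + v)⁻¹ ≤ Real.log (1 + v) := Real.one_sub_inv_le_log_of_pos h1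
      have h3 : (1 - ε) * v ≤ 1 - (1 + v)⁻¹ := by
        rw [inv_eq_one_div, sub_div' (ne_of_gt h1)]
        rw [le_div_iff₀ h1]
        nlinarith [mul_le_mul_of_nonneg_left hvε hv0, mul_nonneg hv0 hv0]
      linarith
    have hwv : w i * v = ε / ρ * (b i / lam) * μ := by
      have h4 := (hw i).ne'
      have h5 := hρ.ne'
      have h6 := hlam.ne'
      rw [hv]; field_simp
    have hextra : 0 ≤ 2 * ε ^ 2 / (k * ρ) * μ := by positivity
    have hw' : w i * (1 + v) ≤ w' i := by
      rw [hup i, mul_add, mul_one, hwv]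
      nlinarith
    have hw'pos : 0 < w i * (1 + v) := mul_pos (hw i) h1
    have hloggoal : Real.log (w i) + Real.log (1 + v) ≤ Real.log (w' i) := by
      have := Real.log_le_log hw'pos hw'
      rwa [Real.log_mul (ne_of_gt (hw i)) (ne_of_gt h1)] at this
    linarith
  have hsum : ∑ i, a i * ((1 - ε) * (ε / ρ * (b i / lam) * (μ / w i))) ≤
      ∑ i, a i * (Real.log (w' i) - Real.log (w i)) :=
    Finset.sum_le_sum fun i _ => mul_le_mul_of_nonneg_left (key i) (ha i)
  have e1 : (1 / OPT) * (∑ i, a i * Real.log (w' i)) -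
      (1 / OPT) * (∑ i, a i * Real.log (w i)) =
      (1 / OPT) * ∑ i, a i * (Real.log (w' i) - Real.log (w i)) := by
    rw [← mul_sub, ← Finset.sum_sub_distrib]
    congr 1
    exact Finset.sum_congr rfl fun i _ => by ring
  have e2 : (ε * (1 - ε) * μ) / (ρ * OPT * lam) * ∑ i, a i * b i / w i =
      (1 / OPT) * ∑ i, a i * ((1 - ε) * (ε / ρ * (b i / lam) * (μ / w i))) := by
    rw [Finset.mul_sum, Finset.mul_sum]
    refine Finset.sum_congr rfl fun i _ => ?_
    field_simp
  rw [e1, e2, ge_iff_le]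
  exact mul_le_mul_of_nonneg_left hsum (by positivity)
end
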